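/- (Section-sum inequality, the key step in the proof of Lemma 5.5) Let V be a finite set of attributes, v ∈ V, and let e_1, …, e_k ⊆ V with v ∈ e_i for all i. Let R_1, …, R_k be finite relations on attribute sets e_1, …, e_k respectively, and let x_1, …, x_k ≥ 0 be reals with x_1 + ⋯ + x_k ≥ 1. For a value a ∈ D, let R_i[a] = { t|_{e_i∖{v}} : t ∈ R_i, t(v) = a } be the a-section of R_i. Then ∑_{a ∈ ⋃_i π_{{v}}(R_i)} ∏_{i=1}^k |R_i[a]|^{x_i} ≤ ∏_{i=1}^k |R_i|^{x_i}. -/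

import Mathlib

open Finset

lemma holder_like {α : Type*} {k : ℕ} (A : Finset α) (f : Fin k → α → ℝ)
    (hf : ∀ i, ∀ a ∈ A, 0 ≤ f i a) (x : Fin k → ℝ) (hx0 : ∀ i, 0 ≤ x i)
    (hxsum : 1 ≤ ∑ i, x i) (S : Fin k → ℝ)
    (hS : ∀ i, ∑ a ∈ A, f i a ≤ S i) :
    ∑ a ∈ A, ∏ i, f i a ^ x i ≤ ∏ i, S i ^ x i := by
  have hS0 : ∀ i, 0 ≤ S i := fun i =>
    le_trans (Finset.sum_nonneg fun a ha => hf i a ha) (hS i)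
  have hCnn : 0 ≤ ∏ i, S i ^ x i :=
    Finset.prod_nonneg fun i _ => Real.rpow_nonneg (hS0 i) _
  have hfS : ∀ i, ∀ a ∈ A, f i a ≤ S i := fun i a ha =>
    le_trans (Finset.single_le_sum (fun b hb => hf i b hb) ha) (hS i)
  by_cases hbad : ∃ i, x i ≠ 0 ∧ S i = 0
  · obtain ⟨i, hxi, hSi⟩ := hbad
    have hz : ∀ a ∈ A, ∏ j, f j a ^ x j = 0 := by
      intro a ha
      apply Finset.prod_eq_zero (Finset.mem_univ i)
      have : f i a = 0 := le_antisymm (hSi ▸ hfS i a ha) (hf i a ha)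
      rw [this, Real.zero_rpow hxi]
    rw [Finset.sum_congr rfl hz, Finset.sum_const, smul_zero]
    exact hCnn
  · push_neg at hbad
    set X := ∑ i, x i with hX
    have hXpos : 0 < X := lt_of_lt_of_le one_pos hxsum
    set y : Fin k → ℝ := fun i => x i / X with hy
    have hy0 : ∀ i, 0 ≤ y i := fun i => div_nonneg (hx0 i) hXpos.le
    have hysum : ∑ i, y i = 1 := by
      rw [hy, ← Finset.sum_div, ← hX, div_self hXpos.ne']
    have hyx : ∀ i, y i ≤ x i := fun i => div_le_self (hx0 i) hxsum
    have key : ∀ a ∈ A,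
        ∏ i, f i a ^ x i ≤ (∑ i, y i * (f i a / S i)) * ∏ i, S i ^ x i := by
      intro a ha
      have h1 : ∏ i, f i a ^ x i ≤ ∏ i, ((f i a / S i) ^ y i * S i ^ x i) := by
        apply Finset.prod_le_prod
        · intro i _; exact Real.rpow_nonneg (hf i a ha) _
        · intro i _
          by_cases hxi : x i = 0
          · have hyi : y i = 0 := by rw [hy]; simp [hxi]
            simp [hxi, hyi]
          · have hSi : 0 < S i := (hS0 i).lt_of_ne (fun h => hbad i hxi h.symm)
            have hfa := hf i a ha
            have hle := hfS i a ha
            have hdnn : 0 ≤ f i a / S i := div_nonneg hfa hSi.le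
            have hEq : f i a ^ x i = (f i a / S i) ^ x i * S i ^ x i := by
              rw [← Real.mul_rpow hdnn hSi.le, div_mul_cancel₀ _ hSi.ne']
            rw [hEq]
            apply mul_le_mul_of_nonneg_right _ (Real.rpow_nonneg hSi.le _)
            rcases eq_or_lt_of_le hdnn with h0 | hpos
            · rw [← h0, Real.zero_rpow hxi, Real.zero_rpow]
              intro hyi
              exact hxi (by simp only [hy] at hyi; exact (div_eq_zero_iff.mp hyi).resolve_right hXpos.ne')
            · exact Real.rpow_le_rpow_of_exponent_ge hpos
                ((div_le_one hSi).2 hle) (hyx i)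
      rw [Finset.prod_mul_distrib] at h1
      refine h1.trans (mul_le_mul_of_nonneg_right ?_ hCnn)
      exact Real.geom_mean_le_arith_mean_weighted Finset.univ y
        (fun i => f i a / S i) (fun i _ => hy0 i) hysum
        (fun i _ => div_nonneg (hf i a ha) (hS0 i))
    calc ∑ a ∈ A, ∏ i, f i a ^ x i
        ≤ ∑ a ∈ A, (∑ i, y i * (f i a / S i)) * ∏ i, S i ^ x i :=
          Finset.sum_le_sum key
      _ = (∑ i, y i * ((∑ a ∈ A, f i a) / S i)) * ∏ i, S i ^ x i := by
          rw [← Finset.sum_mul]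
          congr 1
          rw [Finset.sum_comm]
          exact Finset.sum_congr rfl fun i _ => by
            rw [← Finset.mul_sum, Finset.sum_div]
      _ ≤ 1 * ∏ i, S i ^ x i := by
          apply mul_le_mul_of_nonneg_right _ hCnn
          rw [← hysum]
          apply Finset.sum_le_sum
          intro i _
          rcases eq_or_lt_of_le (hS0 i) with h0 | hSi
          · rw [← h0, div_zero, mul_zero]; exact hy0 i
          · nth_rewrite 2 [← mul_one (y i)]
            exact mul_le_mul_of_nonneg_left ((div_le_one hSi).2 (hS i)) (hy0 i)
      _ = ∏ i, S i ^ x i := one_mul _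

/-- **Section-sum inequality** (key step in the proof of Lemma 5.5).
`v` is an attribute contained in each attribute set `e i`; `R i` is a finite
relation on `e i`; `x i ≥ 0` with `∑ i, x i ≥ 1`.  For a value `a`, the
`a`-section `R i [a]` is the set of restrictions to `e i ∖ {v}` of tuples of
`R i` whose `v`-coordinate equals `a`.  Summing over all values `a` occurring
in some projection `π_{{v}}(R i)`,
`∑_a ∏ i |R i [a]| ^ (x i) ≤ ∏ i |R i| ^ (x i)`
(real powers; `0 ^ y = 0` for `y > 0`). -/
theorem section_sum_inequality
    {V D : Type*} [DecidableEq V] [DecidableEq D]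
    {k : ℕ} (v : V) (e : Fin k → Finset V) (hv : ∀ i, v ∈ e i)
    (R : ∀ i, Finset ({u // u ∈ e i} → D))
    (x : Fin k → ℝ) (hx0 : ∀ i, 0 ≤ x i) (hxsum : 1 ≤ ∑ i, x i) :
    ∑ a ∈ Finset.univ.biUnion (fun i : Fin k => (R i).image (fun t => t ⟨v, hv i⟩)),
      ∏ i, ((((R i).filter (fun t => t ⟨v, hv i⟩ = a)).image
          (fun t => fun u : {u // u ∈ e i \ {v}} =>
            t ⟨u.1, (Finset.mem_sdiff.mp u.2).1⟩)).card : ℝ) ^ x i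
    ≤ ∏ i, ((R i).card : ℝ) ^ x i := by
  set A := Finset.univ.biUnion (fun i : Fin k => (R i).image (fun t => t ⟨v, hv i⟩)) with hA
  have himg : ∀ (i : Fin k) (a : D),
      (((R i).filter (fun t => t ⟨v, hv i⟩ = a)).image
        (fun t => fun u : {u // u ∈ e i \ {v}} =>
          t ⟨u.1, (Finset.mem_sdiff.mp u.2).1⟩)).card
      = ((R i).filter (fun t => t ⟨v, hv i⟩ = a)).card := by
    intro i a
    apply Finset.card_image_of_injOn
    intro t ht t' ht' h
    funext u
    by_cases hu : u.1 = v
    · have hue : u = ⟨v, hv i⟩ := Subtype.ext hu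
      rw [hue, (Finset.mem_filter.mp ht).2, (Finset.mem_filter.mp ht').2]
    · have hu2 : u.1 ∈ e i \ {v} := Finset.mem_sdiff.mpr ⟨u.2, by simpa using hu⟩
      exact congrFun h ⟨u.1, hu2⟩
  have hrw : ∀ a ∈ A, ∏ i, ((((R i).filter (fun t => t ⟨v, hv i⟩ = a)).image
          (fun t => fun u : {u // u ∈ e i \ {v}} =>
            t ⟨u.1, (Finset.mem_sdiff.mp u.2).1⟩)).card : ℝ) ^ x i
      = ∏ i, (((R i).filter (fun t => t ⟨v, hv i⟩ = a)).card : ℝ) ^ x i := by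
    intro a _
    exact Finset.prod_congr rfl fun i _ => by rw [himg i a]
  rw [Finset.sum_congr rfl hrw]
  apply holder_like A (fun i a => (((R i).filter (fun t => t ⟨v, hv i⟩ = a)).card : ℝ))
    (fun i a _ => by positivity) x hx0 hxsum
  intro i
  have := Finset.card_eq_sum_card_fiberwise
    (f := fun t : {u // u ∈ e i} → D => t ⟨v, hv i⟩) (s := R i) (t := A)
    (fun t ht => Finset.mem_biUnion.mpr ⟨i, Finset.mem_univ i, Finset.mem_image_of_mem _ ht⟩)
  rw [this]
  push_cast
  rfl
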